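/- There exists a constant C > 0 such that for every ε ∈ (0, 1/2], every R ≥ 0, every θ ∈ [−π, π] and every ζ ∈ ℂ with max(|ζ|, |θ|) ≤ C·ε·e^{−R}, and every ξ ∈ 𝔻 with |ξ| ≤ (e^R − 1)/(e^R + 1), the Poincaré distance satisfies d_P(ξ, τ_ζ(e^{iθ}·ξ)) ≤ ε. -/

import Mathlib

/-- The inverse hyperbolic tangent. -/
noncomputable def artanh (x : ℝ) : ℝ := Real.log ((1 + x) / (1 - x)) / 2

/-- The Poincaré distance on the unit disc. -/
noncomputable def dP (z w : ℂ) : ℝ :=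
  2 * artanh (‖z - w‖ / ‖1 - (starRingEnd ℂ) w * z‖)

/-- The Möbius automorphism `τ_ζ(ξ) = (ξ + ζ)/(1 + conj(ζ) ξ)` of the unit disc. -/
noncomputable def moebius (ζ ξ : ℂ) : ℂ := (ξ + ζ) / (1 + (starRingEnd ℂ) ζ * ξ)

set_option maxHeartbeats 1000000 in
/-- if `max(|ζ|,|θ|) ≤ C ε e^{-R}`, then `d_P(ξ, τ_ζ(e^{iθ}ξ)) ≤ ε`
on the closed hyperbolic disk of radius `R`. -/
theorem stmt_18 :
    ∃ C : ℝ, 0 < C ∧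
      ∀ ε : ℝ, ε ∈ Set.Ioc (0 : ℝ) (1 / 2) → ∀ R : ℝ, 0 ≤ R →
        ∀ θ ∈ Set.Icc (-Real.pi) Real.pi, ∀ ζ : ℂ,
          max (‖ζ‖) |θ| ≤ C * ε * Real.exp (-R) →
          ∀ ξ : ℂ, ‖ξ‖ ≤ (Real.exp R - 1) / (Real.exp R + 1) →
            dP ξ (moebius ζ (Complex.exp (θ * Complex.I) * ξ)) ≤ ε := by
  refine ⟨1/100, by norm_num, ?_⟩
  rintro ε ⟨hε0, hε2⟩ R hR θ ⟨hθ1, hθ2⟩ ζ hmax ξ hξ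
  set δ := max (‖ζ‖) |θ| with hδdef
  have hζδ : ‖ζ‖ ≤ δ := le_max_left _ _
  have hθδ : |θ| ≤ δ := le_max_right _ _
  have hδ0 : 0 ≤ δ := (norm_nonneg ζ).trans hζδ
  have hE1 : (1:ℝ) ≤ Real.exp R := Real.one_le_exp hR
  have hEneg : Real.exp (-R) ≤ 1 := by
    rw [Real.exp_neg]; exact inv_le_one_of_one_le₀ hE1
  have hEneg0 : 0 < Real.exp (-R) := Real.exp_pos _
  have hδe : δ ≤ (1/100) * ε * Real.exp (-R) := hmax
  have hδs : δ ≤ 1/200 := by nlinarith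
  -- bounds on r = |ξ|
  set r := ‖ξ‖ with hrdef
  have hr0 : 0 ≤ r := norm_nonneg ξ
  have hr2 : Real.exp (-R) ≤ 1 - r^2 := by
    have hEE : Real.exp R * Real.exp (-R) = 1 := by
      rw [← Real.exp_add]; simp
    have h1 : r * (Real.exp R + 1) ≤ Real.exp R - 1 :=
      (le_div_iff₀ (by linarith : (0:ℝ) < Real.exp R + 1)).mp hξ
    have h2 : (r * (Real.exp R + 1))^2 ≤ (Real.exp R - 1)^2 := by
      have hnn : 0 ≤ r * (Real.exp R + 1) := mul_nonneg hr0 (by linarith)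
      nlinarith
    nlinarith [sq_nonneg (Real.exp R + 1), mul_pos hEneg0 (Real.exp_pos R)]
  have hr1 : r ≤ 1 := by nlinarith
  -- the rotation
  set η := Complex.exp ((θ:ℂ) * Complex.I) with hηdef
  have hηabs : ‖η‖ = 1 := by simp [hηdef, Complex.norm_exp]
  have hη1 : ‖η - 1‖ ≤ 2 * δ := by
    have h1 : ‖(θ:ℂ) * Complex.I‖ = |θ| := by simp
    have h2 := Complex.norm_exp_sub_one_le (x := (θ:ℂ) * Complex.I)
      (by rw [h1]; linarith)
    rw [h1] at h2; linarith
  -- denominator of moebius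
  set D1 := 1 + (starRingEnd ℂ) ζ * (η * ξ) with hD1def
  have hD1in : ‖(starRingEnd ℂ) ζ * (η * ξ)‖ ≤ δ := by
    rw [norm_mul, norm_mul, Complex.norm_conj, hηabs]
    nlinarith
  have hD1 : (199:ℝ)/200 ≤ ‖D1‖ := by
    have h3 : ‖D1 + -((starRingEnd ℂ) ζ * (η * ξ))‖
        ≤ ‖D1‖ + ‖-((starRingEnd ℂ) ζ * (η * ξ))‖ :=
      norm_add_le _ _
    rw [norm_neg] at h3
    have h4 : D1 + -((starRingEnd ℂ) ζ * (η * ξ)) = 1 := by rw [hD1def]; ring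
    rw [h4, norm_one] at h3
    linarith
  have hD1pos : 0 < ‖D1‖ := by linarith
  have hD1ne : D1 ≠ 0 := by
    intro h; rw [h, norm_zero] at hD1pos; exact lt_irrefl _ hD1pos
  have hcD1ne : (starRingEnd ℂ) D1 ≠ 0 := by simpa using hD1ne
  -- key algebraic identities
  set w := moebius ζ (η * ξ) with hwdef
  set num1 := (1 - η) * ξ - ζ + (starRingEnd ℂ) ζ * η * ξ^2 with hnum1def
  set N2 := 1 + ζ * (starRingEnd ℂ) η * (starRingEnd ℂ) ξ
      - (starRingEnd ℂ) η * ((starRingEnd ℂ) ξ * ξ) - (starRingEnd ℂ) ζ * ξ with hN2def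
  have hsub : (ξ - w) * D1 = num1 := by
    rw [hwdef]; unfold moebius; rw [← hD1def]
    rw [sub_mul, div_mul_cancel₀ _ hD1ne, hnum1def, hD1def]; ring
  have hone : (1 - (starRingEnd ℂ) w * ξ) * (starRingEnd ℂ) D1 = N2 := by
    have hw : (starRingEnd ℂ) w = (starRingEnd ℂ) (η * ξ + ζ) / (starRingEnd ℂ) D1 := by
      rw [hwdef]; unfold moebius; rw [← hD1def, map_div₀]
    rw [hw, sub_mul, one_mul, div_mul_eq_mul_div, div_mul_cancel₀ _ hcD1ne]
    rw [hN2def, hD1def]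
    simp only [map_add, map_mul, map_one, Complex.conj_conj]
    ring
  -- abs identities
  have hAbsSub : ‖ξ - w‖ = ‖num1‖ / ‖D1‖ := by
    rw [eq_div_iff (ne_of_gt hD1pos), ← norm_mul, hsub]
  have hAbsOne : ‖1 - (starRingEnd ℂ) w * ξ‖
      = ‖N2‖ / ‖D1‖ := by
    rw [eq_div_iff (ne_of_gt hD1pos)]
    have : ‖D1‖ = ‖(starRingEnd ℂ) D1‖ := (Complex.norm_conj D1).symm
    rw [this, ← norm_mul, hone]
  -- bound on numerator
  have habsnum1 : ‖num1‖ ≤ 4 * δ := by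
    have t1 : ‖num1‖ ≤ ‖(1 - η) * ξ‖ + ‖ζ‖
        + ‖(starRingEnd ℂ) ζ * η * ξ^2‖ := by
      rw [hnum1def, sub_eq_add_neg]
      calc ‖(1 - η) * ξ + -ζ + (starRingEnd ℂ) ζ * η * ξ^2‖
          ≤ ‖(1 - η) * ξ + -ζ‖ + ‖(starRingEnd ℂ) ζ * η * ξ^2‖ :=
            norm_add_le _ _
        _ ≤ ‖(1 - η) * ξ‖ + ‖-ζ‖
            + ‖(starRingEnd ℂ) ζ * η * ξ^2‖ := by
            linarith [norm_add_le ((1 - η) * ξ) (-ζ)]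
        _ = _ := by rw [norm_neg]
    have t2 : ‖(1 - η) * ξ‖ ≤ 2 * δ * r := by
      rw [norm_mul, norm_sub_rev]
      exact mul_le_mul hη1 le_rfl hr0 (by linarith)
    have t3 : ‖(starRingEnd ℂ) ζ * η * ξ^2‖ ≤ δ := by
      rw [norm_mul, norm_mul, Complex.norm_conj, hηabs, norm_pow]
      nlinarith
    nlinarith
  -- lower bound on N2
  have habsN2 : (99:ℝ)/100 * Real.exp (-R) ≤ ‖N2‖ := by
    have key : ‖1 - (starRingEnd ℂ) η * ((starRingEnd ℂ) ξ * ξ)‖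
        ≥ 1 - r^2 := by
      have hx : ‖(starRingEnd ℂ) η * ((starRingEnd ℂ) ξ * ξ)‖ = r^2 := by
        rw [norm_mul, norm_mul, Complex.norm_conj, Complex.norm_conj, hηabs, one_mul]
        ring
      have h3 := norm_add_le (1 - (starRingEnd ℂ) η * ((starRingEnd ℂ) ξ * ξ))
        ((starRingEnd ℂ) η * ((starRingEnd ℂ) ξ * ξ))
      simp only [sub_add_cancel, norm_one] at h3
      rw [hx] at h3
      linarith
    have hrest1 : ‖ζ * (starRingEnd ℂ) η * (starRingEnd ℂ) ξ‖ ≤ δ := by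
      rw [norm_mul, norm_mul, Complex.norm_conj, Complex.norm_conj, hηabs]
      nlinarith
    have hrest2 : ‖(starRingEnd ℂ) ζ * ξ‖ ≤ δ := by
      rw [norm_mul, Complex.norm_conj]
      nlinarith
    have hsplit : ‖N2‖ ≥
        ‖1 - (starRingEnd ℂ) η * ((starRingEnd ℂ) ξ * ξ)‖
        - ‖ζ * (starRingEnd ℂ) η * (starRingEnd ℂ) ξ‖
        - ‖(starRingEnd ℂ) ζ * ξ‖ := by
      have e1 : (1 : ℂ) - (starRingEnd ℂ) η * ((starRingEnd ℂ) ξ * ξ)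
          = N2 + (starRingEnd ℂ) ζ * ξ + -(ζ * (starRingEnd ℂ) η * (starRingEnd ℂ) ξ) := by
        rw [hN2def]; ring
      have h4 := norm_add_le (N2 + (starRingEnd ℂ) ζ * ξ)
        (-(ζ * (starRingEnd ℂ) η * (starRingEnd ℂ) ξ))
      have h5 := norm_add_le N2 ((starRingEnd ℂ) ζ * ξ)
      rw [norm_neg] at h4
      rw [e1]
      linarith
    nlinarith
  -- the pseudo-hyperbolic distance bound
  set ρ := ‖ξ - w‖ / ‖1 - (starRingEnd ℂ) w * ξ‖ with hρdef
  have hN2pos : 0 < ‖N2‖ := by nlinarith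
  have hρeq : ρ = ‖num1‖ / ‖N2‖ := by
    rw [hρdef, hAbsSub, hAbsOne]
    field_simp
  have hρ0 : 0 ≤ ρ := by
    rw [hρeq]; positivity
  have hρle : ρ ≤ ε / 20 := by
    rw [hρeq]
    rw [div_le_iff₀ hN2pos]
    calc ‖num1‖ ≤ 4 * δ := habsnum1
      _ ≤ 4 * ((1/100) * ε * Real.exp (-R)) := by linarith
      _ ≤ ε / 20 * ((99:ℝ)/100 * Real.exp (-R)) := by nlinarith
      _ ≤ ε / 20 * ‖N2‖ := by nlinarith
  have hρsmall : ρ ≤ 1 / 40 := by linarith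
  -- conclude
  show dP ξ w ≤ ε
  unfold dP artanh
  rw [← hρdef]
  have hlog : Real.log ((1 + ρ) / (1 - ρ)) ≤ 2 * ρ / (1 - ρ) := by
    have hpos : 0 < (1 + ρ) / (1 - ρ) := by
      apply div_pos <;> linarith
    have := Real.log_le_sub_one_of_pos hpos
    have hne : (1:ℝ) - ρ ≠ 0 := ne_of_gt (by linarith)
    have heq : (1 + ρ) / (1 - ρ) - 1 = 2 * ρ / (1 - ρ) := by
      field_simp; ring
    linarith [heq ▸ this]
  have hfin : 2 * ρ / (1 - ρ) ≤ ε := by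
    rw [div_le_iff₀ (by linarith : (0:ℝ) < 1 - ρ)]
    nlinarith
  linarith [hlog, hfin]
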